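/- Let G be an (n−3)-regular simple graph of order n ≥ 5 and let B ⊆ E(G) be a Roman bondage set of G (i.e., γ_R(G − B) > γ_R(G)). Then for every vertex x of G, at least one edge of B is incident with x. -/

import Mathlib

open SimpleGraph

/-- The Roman domination number: the minimum weight of a Roman dominating function,
i.e. a function `f : V → ℕ` with values in `{0,1,2}` such that every vertex with
value `0` has a neighbor with value `2`. -/
noncomputable def romanDominationNumber {V : Type*} [Fintype V] (G : SimpleGraph V) : ℕ :=
  sInf {w | ∃ f : V → ℕ, (∀ v, f v ≤ 2) ∧
    (∀ v, f v = 0 → ∃ u, G.Adj v u ∧ f u = 2) ∧ w = ∑ v, f v}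

/-- The Roman bondage number: the minimum cardinality of a set `B` of edges of `G`
whose removal increases the Roman domination number. -/
noncomputable def romanBondageNumber {V : Type*} [Fintype V] (G : SimpleGraph V) : ℕ :=
  sInf {k | ∃ B : Finset (Sym2 V), ↑B ⊆ G.edgeSet ∧ B.card = k ∧
    romanDominationNumber G < romanDominationNumber (G.deleteEdges ↑B)}

/-- Lower bound: if every vertex has degree at most `n - 3` with `n ≥ 5`, then
the Roman domination number is at least 4. -/
lemma aux_roman_lb {V : Type*} [Fintype V] [DecidableEq V] (G : SimpleGraph V)
    [DecidableRel G.Adj] (n : ℕ) (hn : Fintype.card V = n) (h5 : 5 ≤ n)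
    (hdeg : ∀ v, G.degree v ≤ n - 3) : 4 ≤ romanDominationNumber G := by
  have hne : {w | ∃ f : V → ℕ, (∀ v, f v ≤ 2) ∧
      (∀ v, f v = 0 → ∃ u, G.Adj v u ∧ f u = 2) ∧ w = ∑ v, f v}.Nonempty := by
    refine ⟨n, fun _ => 1, fun _ => by norm_num, fun v h => by simp at h, ?_⟩
    simp [hn]
  apply le_csInf hne
  rintro w ⟨f, hf2, hdom, rfl⟩
  classical
  set S0 := Finset.univ.filter (fun v => f v = 0) with hS0
  set S1 := Finset.univ.filter (fun v => f v = 1) with hS1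
  set S2 := Finset.univ.filter (fun v => f v = 2) with hS2
  have hcover : n ≤ S0.card + S1.card + S2.card := by
    have hsub : (Finset.univ : Finset V) ⊆ S0 ∪ S1 ∪ S2 := by
      intro v _
      have := hf2 v
      simp only [S0, S1, S2, Finset.mem_union, Finset.mem_filter, Finset.mem_univ, true_and]
      omega
    have h1 := Finset.card_le_card hsub
    have h2 := Finset.card_union_le (S0 ∪ S1) S2
    have h3 := Finset.card_union_le S0 S1
    rw [Finset.card_univ, hn] at h1
    omega
  have hsumge : S1.card + 2 * S2.card ≤ ∑ v, f v := by
    have hdisj : Disjoint S1 S2 := by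
      rw [Finset.disjoint_left]
      intro v h1 h2
      simp only [S1, S2, Finset.mem_filter] at h1 h2
      omega
    have h1 : ∑ v ∈ S1, f v = S1.card := by
      rw [Finset.sum_congr rfl (fun v hv => by
        simp only [S1, Finset.mem_filter] at hv; exact hv.2)]
      simp
    have h2 : ∑ v ∈ S2, f v = 2 * S2.card := by
      rw [Finset.sum_congr rfl (fun v hv => by
        simp only [S2, Finset.mem_filter] at hv; exact hv.2)]
      simp [mul_comm]
    calc S1.card + 2 * S2.card = ∑ v ∈ S1 ∪ S2, f v := by
          rw [Finset.sum_union hdisj, h1, h2]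
      _ ≤ ∑ v, f v := Finset.sum_le_sum_of_subset (Finset.subset_univ _)
  rcases Nat.lt_or_ge S2.card 2 with hc | hc
  · rcases Nat.lt_or_ge S2.card 1 with hc0 | hc1
    · -- S2 empty: every vertex has f v ≥ 1
      have hS2e : S2 = ∅ := Finset.card_eq_zero.mp (by omega)
      have hge1 : ∀ v, 1 ≤ f v := by
        intro v
        by_contra h
        have hv0 : f v = 0 := by omega
        obtain ⟨u, _, hu⟩ := hdom v hv0
        have : u ∈ S2 := by simp [S2, hu]
        simp [hS2e] at this
      calc 4 ≤ n := by omega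
        _ = ∑ _v : V, 1 := by simp [hn]
        _ ≤ ∑ v, f v := Finset.sum_le_sum (fun v _ => hge1 v)
    · -- S2.card = 1
      have h1 : S2.card = 1 := by omega
      obtain ⟨u, hu⟩ := Finset.card_eq_one.mp h1
      have hS0sub : S0 ⊆ G.neighborFinset u := by
        intro v hv
        simp only [S0, Finset.mem_filter] at hv
        obtain ⟨w, hadj, hw⟩ := hdom v hv.2
        have hwu : w = u := by
          have : w ∈ S2 := by simp [S2, hw]
          rw [hu] at this; simpa using this
        rw [SimpleGraph.mem_neighborFinset]
        exact (hwu ▸ hadj).symm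
      have hS0card : S0.card ≤ n - 3 := by
        calc S0.card ≤ (G.neighborFinset u).card := Finset.card_le_card hS0sub
          _ = G.degree u := (G.card_neighborFinset_eq_degree u)
          _ ≤ n - 3 := hdeg u
      omega
  · omega

theorem roman_bondage_set_covers
    {V : Type*} [Fintype V] [DecidableEq V] (G : SimpleGraph V) [DecidableRel G.Adj]
    (n : ℕ) (hn : Fintype.card V = n) (h5 : 5 ≤ n)
    (hreg : G.IsRegularOfDegree (n - 3))
    (B : Finset (Sym2 V)) (hBsub : ↑B ⊆ G.edgeSet)
    (hB : romanDominationNumber G < romanDominationNumber (G.deleteEdges ↑B)) :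
    ∀ x : V, ∃ e ∈ B, x ∈ e := by
  intro x
  by_contra hx
  push_neg at hx
  have hlb : 4 ≤ romanDominationNumber G :=
    aux_roman_lb G n hn h5 (fun v => le_of_eq (hreg v))
  have hub : romanDominationNumber (G.deleteEdges ↑B) ≤ 4 := by
    have hmem : 4 ∈ {w | ∃ f : V → ℕ, (∀ v, f v ≤ 2) ∧
        (∀ v, f v = 0 → ∃ u, (G.deleteEdges ↑B).Adj v u ∧ f u = 2) ∧ w = ∑ v, f v} := by
      refine ⟨fun v => if v = x then 2 else if G.Adj x v then 0 else 1, ?_, ?_, ?_⟩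
      · intro v; dsimp only; split_ifs <;> norm_num
      · intro v hv
        dsimp only at hv
        by_cases h1 : v = x
        · simp [h1] at hv
        by_cases h2 : G.Adj x v
        · refine ⟨x, SimpleGraph.deleteEdges_adj.mpr ⟨h2.symm, ?_⟩, by simp⟩
          intro hmem
          rw [Finset.mem_coe] at hmem
          exact hx _ hmem (Sym2.mem_mk_right v x)
        · simp [h1, h2] at hv
      · -- sum computation
        have hsub : G.neighborFinset x ⊆ Finset.univ.erase x := by
          intro v hv
          simp only [SimpleGraph.mem_neighborFinset] at hv
          exact Finset.mem_erase.mpr ⟨fun h => G.loopless.irrefl x (h ▸ hv), Finset.mem_univ v⟩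
        have hcard : ((Finset.univ.erase x) \ G.neighborFinset x).card = 2 := by
          rw [Finset.card_sdiff_of_subset hsub, Finset.card_erase_of_mem (Finset.mem_univ x),
            G.card_neighborFinset_eq_degree, hreg x, Finset.card_univ, hn]
          omega
        have hsum : ∑ v : V, (if v = x then (2:ℕ) else if G.Adj x v then 0 else 1) = 4 := by
          rw [← Finset.sum_erase_add _ _ (Finset.mem_univ x), if_pos rfl]
          have heq : ∀ v ∈ Finset.univ.erase x,
              (if v = x then (2:ℕ) else if G.Adj x v then 0 else 1) =
              (if ¬ G.Adj x v then 1 else 0) := by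
            intro v hv
            rw [if_neg (Finset.mem_erase.mp hv).1]
            by_cases h : G.Adj x v <;> simp [h]
          rw [Finset.sum_congr rfl heq, Finset.sum_boole]
          have hfilt : (Finset.univ.erase x).filter (fun v => ¬ G.Adj x v)
              = (Finset.univ.erase x) \ G.neighborFinset x := by
            ext v
            simp only [Finset.mem_filter, Finset.mem_sdiff, Finset.mem_erase,
              SimpleGraph.mem_neighborFinset, Finset.mem_univ, and_true, true_and]
          rw [hfilt, hcard]
          norm_num
        exact hsum.symm
    exact Nat.sInf_le hmem
  omega
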